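/- Let G = (ℤ/2ℤ)^n, let Q ≤ G be a subgroup with quotient map π: G → G/Q. Let S ⊆ G be a Sidon set and let B ⊆ S be a subset on which π is injective, such that every element s ∈ S \ B satisfies π(s) ∈ π(B). Then |S \ B| ≤ |Q|, and hence |S| ≤ |B| + |Q|. -/

import Mathlib

/-- A subset `S` of an abelian group is Sidon: whenever `a + b = c + d` with
`a, b, c, d ∈ S`, `a ≠ b`, and `c ≠ d`, one has `{a, b} = {c, d}`. -/
def IsSidon {G : Type*} [AddCommGroup G] (S : Set G) : Prop :=
  ∀ a ∈ S, ∀ b ∈ S, ∀ c ∈ S, ∀ d ∈ S,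
    a ≠ b → c ≠ d → a + b = c + d → ({a, b} : Set G) = {c, d}

lemma neg_eq_self' (x : Fin n → ZMod 2) : -x = x := by
  funext i
  have : x i + x i = 0 := by
    have := CharTwo.add_self_eq_zero (x i)
    exact this
  exact neg_eq_of_add_eq_zero_left this


/-- Let `Q ≤ G = (ℤ/2ℤ)^n` with quotient map `π`, let `S ⊆ G` be Sidon and
`B ⊆ S` a subset on which `π` is injective such that every `s ∈ S \ B` has `π(s) ∈ π(B)`.
Then `|S \ B| ≤ |Q|`, and hence `|S| ≤ |B| + |Q|`. -/
theorem extension_size_bound (n : ℕ) (Q : AddSubgroup (Fin n → ZMod 2))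
    (S B : Finset (Fin n → ZMod 2)) (hS : IsSidon (↑S : Set (Fin n → ZMod 2)))
    (hBS : B ⊆ S)
    (hinj : Set.InjOn (QuotientAddGroup.mk' Q) (↑B : Set (Fin n → ZMod 2)))
    (hcover : ∀ s ∈ S, s ∉ B →
      (QuotientAddGroup.mk' Q) s ∈ (QuotientAddGroup.mk' Q) '' (↑B : Set (Fin n → ZMod 2))) :
    (S \ B).card ≤ Nat.card Q ∧ S.card ≤ B.card + Nat.card Q := by
  classical
  have hfin : ∀ s ∈ S \ B, ∃ b, b ∈ B ∧ s + b ∈ Q := by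
    intro s hs
    rw [Finset.mem_sdiff] at hs
    obtain ⟨b, hbB, hbe⟩ := hcover s hs.1 hs.2
    refine ⟨b, hbB, ?_⟩
    have : (s : (Fin n → ZMod 2) ⧸ Q) = (b : (Fin n → ZMod 2) ⧸ Q) := hbe.symm
    rw [QuotientAddGroup.eq] at this
    have h2 : -s + b = s + b := by rw [neg_eq_self']
    rwa [h2] at this
  choose f hfB hfQ using hfin
  have h1 : (S \ B).card ≤ Nat.card Q := by
    have : (S \ B).card ≤ (Set.toFinset (Q : Set (Fin n → ZMod 2))).card := by
      apply Finset.card_le_card_of_injOn (fun s => if h : s ∈ S \ B then s + f s h else 0)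
      · intro s hs
        simp only [hs, dif_pos]
        simpa [Finset.mem_sdiff.mp (Finset.mem_coe.mp hs)] using hfQ s hs
      · intro s hs s' hs' heq
        simp only [Finset.mem_coe] at hs hs'
        simp only [hs, hs', dif_pos] at heq
        have hsm := Finset.mem_sdiff.mp hs
        have hs'm := Finset.mem_sdiff.mp hs'
        have hsne : s ≠ f s hs := fun h => hsm.2 (h ▸ hfB _ _)
        have hs'ne : s' ≠ f s' hs' := fun h => hs'm.2 (h ▸ hfB _ _)
        have := hS s hsm.1 (f s hs) (hBS (hfB _ _)) s' hs'm.1 (f s' hs') (hBS (hfB _ _))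
          hsne hs'ne heq
        have hmem : s ∈ ({s', f s' hs'} : Set (Fin n → ZMod 2)) := by
          rw [← this]; left; rfl
        rcases hmem with h | h
        · exact h
        · exact absurd (h ▸ hfB s' hs') hsm.2
    simpa [Set.toFinset_card, Nat.card_eq_fintype_card] using this
  refine ⟨h1, ?_⟩
  have h2 := Finset.card_sdiff_add_card_eq_card hBS
  omega
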